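/- arXiv:math/9902071 — 4 statements merged into one kernel-verified Lean document; each statement's English description precedes it below -/
import Mathlib

section
/- Let F be the filter on ω^ω of all A with order type of ω^ω \ A less than ω^ω. If X ⊆ ω^ω is F-positive and Φ : X → ω^ω is an order isomorphism, then for all A ⊆ X, A is in the restriction of F to X (i.e., A = X ∩ B for some B ∈ F) if and only if Φ(A) ∈ F. In particular, F is homogeneous. -/
/-- The order type of a set of ordinals (here, of elements of `ω^ω`). -/
noncomputable def otype {α : Type*} [LinearOrder α] [WellFoundedLT α] (S : Set α) : Ordinal :=
  Ordinal.type ((· < ·) : S → S → Prop)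

lemma otype_mono {α : Type*} [LinearOrder α] [WellFoundedLT α] {S T : Set α} (h : S ⊆ T) :
    otype S ≤ otype T := by
  refine RelEmbedding.ordinal_type_le ⟨⟨Set.inclusion h, Set.inclusion_injective h⟩, ?_⟩
  intro a b
  simp [Set.inclusion, Subtype.coe_lt_coe]

universe u v w

lemma lift_otype_image {α : Type u} {β : Type v} [LinearOrder α] [WellFoundedLT α]
    [LinearOrder β] [WellFoundedLT β] {f : α → β} (hf : StrictMono f) (S : Set α) :
    Ordinal.lift.{u} (otype (f '' S)) = Ordinal.lift.{v} (otype S) := by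
  refine RelIso.ordinal_lift_type_eq (RelIso.symm ⟨Equiv.Set.image f S hf.injective, ?_⟩)
  intro a b
  exact hf.lt_iff_lt

lemma lift_omega0_opow_natCast (n : ℕ) :
    Ordinal.lift.{v} (Ordinal.omega0 ^ (n : Ordinal.{u})) = Ordinal.omega0 ^ (n : Ordinal) := by
  induction n with
  | zero => simp
  | succ n ih =>
      push_cast
      rw [Ordinal.opow_add, Ordinal.opow_add, Ordinal.lift_mul, ih]
      simp [Ordinal.lift_omega0]

lemma lt_omega0_opow_omega0_iff {y : Ordinal.{w}} :
    y < Ordinal.omega0 ^ Ordinal.omega0 ↔ ∃ n : ℕ, y < Ordinal.omega0 ^ (n : Ordinal) := by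
  rw [Ordinal.lt_opow_of_isSuccLimit Ordinal.omega0_ne_zero Ordinal.isSuccLimit_omega0]
  constructor
  · rintro ⟨b, hb, hyb⟩
    obtain ⟨n, rfl⟩ := Ordinal.lt_omega0.1 hb
    exact ⟨n, hyb⟩
  · rintro ⟨n, hn⟩
    exact ⟨n, Ordinal.nat_lt_omega0 n, hn⟩

lemma lift_lt_omega0_opow_omega0 {x : Ordinal.{u}} :
    Ordinal.lift.{v} x < Ordinal.omega0 ^ Ordinal.omega0 ↔
      x < Ordinal.omega0 ^ Ordinal.omega0 := by
  rw [lt_omega0_opow_omega0_iff, lt_omega0_opow_omega0_iff]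
  refine exists_congr fun n => ?_
  rw [show (Ordinal.omega0 ^ (n : Ordinal) : Ordinal.{max u v})
        = Ordinal.lift.{v} (Ordinal.omega0 ^ (n : Ordinal.{u})) from
      (lift_omega0_opow_natCast n).symm,
    Ordinal.lift_lt]

/-- Let `F` be the filter on `ω^ω` of all sets whose complement has order type `< ω^ω`.
If `X ⊆ ω^ω` is `F`-positive and `Φ : X → ω^ω` is an order isomorphism, then a set
`A ⊆ X` belongs to the restriction of `F` to `X` (i.e. `A = X ∩ B` for some `B ∈ F`)
iff `Φ(A) ∈ F`.  In particular, `F` is homogeneous. -/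
theorem filter_restriction_iso
    (X : Set (Set.Iio (Ordinal.omega0 ^ Ordinal.omega0)))
    (hX : ∀ A : Set (Set.Iio (Ordinal.omega0 ^ Ordinal.omega0)),
        otype Aᶜ < Ordinal.omega0 ^ Ordinal.omega0 → (X ∩ A).Nonempty)
    (Φ : X ≃o Set.Iio (Ordinal.omega0 ^ Ordinal.omega0)) :
    ∀ A : Set X,
      (∃ B : Set (Set.Iio (Ordinal.omega0 ^ Ordinal.omega0)),
          otype Bᶜ < Ordinal.omega0 ^ Ordinal.omega0 ∧
            (Subtype.val '' A : Set (Set.Iio (Ordinal.omega0 ^ Ordinal.omega0))) = X ∩ B) ↔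
        otype ((Φ '' A : Set (Set.Iio (Ordinal.omega0 ^ Ordinal.omega0)))ᶜ) <
          Ordinal.omega0 ^ Ordinal.omega0 := by
  intro A
  have hvalc : (Subtype.val '' Aᶜ : Set (Set.Iio (Ordinal.omega0 ^ Ordinal.omega0)))
      = X \ Subtype.val '' A := by
    ext x
    constructor
    · rintro ⟨a, ha, rfl⟩
      exact ⟨a.2, fun ⟨b, hb, hba⟩ => ha (by rwa [Subtype.val_injective hba] at hb)⟩
    · rintro ⟨hxX, hxA⟩
      exact ⟨⟨x, hxX⟩, fun h => hxA ⟨⟨x, hxX⟩, h, rfl⟩, rfl⟩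
  have k1 := lift_otype_image Φ.strictMono Aᶜ
  have hsm : StrictMono (Subtype.val : X → Set.Iio (Ordinal.omega0 ^ Ordinal.omega0)) :=
    fun a b h => h
  have k2 := lift_otype_image hsm Aᶜ
  rw [hvalc] at k2
  have k2' : otype (X \ Subtype.val '' A) = otype Aᶜ := Ordinal.lift_inj.1 k2
  have main : otype ((Φ '' A : Set _)ᶜ) < Ordinal.omega0 ^ Ordinal.omega0
      ↔ otype Aᶜ < Ordinal.omega0 ^ Ordinal.omega0 := by
    rw [← lift_lt_omega0_opow_omega0 (x := otype ((Φ '' A : Set _)ᶜ)),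
      ← Set.image_compl_eq Φ.bijective, k1, lift_lt_omega0_opow_omega0]
  rw [main, ← k2']
  constructor
  · rintro ⟨B, hB, hAB⟩
    refine lt_of_le_of_lt (otype_mono ?_) hB
    intro x hx hxB
    exact hx.2 (hAB ▸ ⟨hx.1, hxB⟩)
  · intro h
    refine ⟨Subtype.val '' A ∪ Xᶜ, ?_, ?_⟩
    · rwa [Set.compl_union, compl_compl, Set.inter_comm, ← Set.diff_eq]
    · ext x
      constructor
      · rintro ⟨a, ha, rfl⟩
        exact ⟨a.2, Or.inl ⟨a, ha, rfl⟩⟩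
      · rintro ⟨hxX, hx⟩
        rcases hx with hx | hx
        · exact hx
        · exact absurd hxX hx
end

section
/- Let A = {A_α : α < ω₁} be an independent family of subsets of ℕ generating a filter F, and suppose that for every F-positive X ⊆ ℕ there exists γ < ω₁ such that X ∩ L_ρ ≠ ∅ for all ρ ∈ Fn(ω₁ \ γ, 2), where L_ρ = ⋂_{α ∈ dom ρ} A_α^{ρ(α)}. Then for every F-positive X there exist δ < ω₁ and a finite-to-one function φ : δ → ℕ such that [⋂_{φ(α)<n} A_α \ ⋂_{φ(α)≤n} A_α] ∩ L_ρ ∩ X ≠ ∅ for all n < ω and all ρ ∈ Fn(ω₁ \ δ, 2). -/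
universe u

open Cardinal Set

/-- Pick the natural number coded by an ordinal below `ω` (junk `0` otherwise). -/
noncomputable def natOf (o : Ordinal.{u}) : ℕ :=
  if h : o < Ordinal.omega0 then (Ordinal.lt_omega0.1 h).choose else 0

lemma natOf_cast (m : ℕ) : natOf (m : Ordinal.{u}) = m := by
  have h : (m : Ordinal.{u}) < Ordinal.omega0 := Ordinal.nat_lt_omega0 m
  rw [natOf, dif_pos h]
  have := (Ordinal.lt_omega0.1 h).choose_spec
  exact_mod_cast this.symm

lemma countable_Iio_of_lt_ord {o : Ordinal.{u}} (h : o < (Cardinal.aleph 1).ord) :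
    (Set.Iio o).Countable := by
  rw [Cardinal.countable_iff_lt_aleph_one, Ordinal.mk_Iio_ordinal]
  exact Cardinal.lift_lt_aleph_one.2 (Cardinal.lt_ord.1 h)

lemma exists_bound_of_countable {S : Set Ordinal.{u}} (hS : S.Countable)
    (hlt : ∀ o ∈ S, o < (Cardinal.aleph 1).ord) :
    ∃ b < (Cardinal.aleph 1).ord, ∀ o ∈ S, o ≤ b := by
  rcases S.eq_empty_or_nonempty with rfl | hne
  · refine ⟨0, ?_, by simp⟩
    rw [Cardinal.lt_ord]
    simpa using aleph_pos 1
  · obtain ⟨f, hf⟩ := hS.exists_surjective hne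
    refine ⟨⨆ n, (f n : Ordinal), ?_, ?_⟩
    · refine Ordinal.iSup_lt_ord_lift ?_ fun n => hlt _ (f n).2
      rw [Cardinal.mk_nat, Cardinal.lift_aleph0, Cardinal.isRegular_aleph_one.cof_eq]
      exact Cardinal.aleph0_lt_aleph_one
    · intro o ho
      obtain ⟨n, hn⟩ := hf ⟨o, ho⟩
      have : o = (f n : Ordinal) := by rw [hn]
      rw [this]
      exact Ordinal.le_iSup (fun n => (f n : Ordinal)) n
/-- `A¹ = A`, `A⁰ = ℕ \ A`. -/
def pw (A : Set ℕ) (b : Bool) : Set ℕ := if b then A else Aᶜ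

/-- `L_ρ` for a finite partial function `ρ ∈ Fn(ω₁, 2)`, coded as a finite set `s` of
ordinals (the domain) together with `g : Ordinal → Bool` (the values). -/
def Lset (A : Ordinal → Set ℕ) (s : Finset Ordinal) (g : Ordinal → Bool) : Set ℕ :=
  ⋂ α ∈ s, pw (A α) (g α)

/-- Lemma 4.2: let `{A_α : α < ω₁}` be an independent family of subsets of `ℕ`
generating a filter `F`.  Suppose that for every `F`-positive `X` there is `γ < ω₁` with
`X ∩ L_ρ ≠ ∅` for all `ρ ∈ Fn(ω₁ \ γ, 2)`.  Then for every `F`-positive `X` there are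
`δ < ω₁` and a finite-to-one `φ : δ → ℕ` such that
`[⋂_{φ(α)<n} A_α \ ⋂_{φ(α)≤n} A_α] ∩ L_ρ ∩ X ≠ ∅` for all `n < ω` and
`ρ ∈ Fn(ω₁ \ δ, 2)`. -/
theorem eventually_independent_finiteToOne
    (A : Ordinal → Set ℕ)
    (hind : ∀ H K : Finset Ordinal, ↑H ⊆ Set.Iio (Cardinal.aleph 1).ord →
      ↑K ⊆ Set.Iio (Cardinal.aleph 1).ord → Disjoint H K →
      ((⋂ α ∈ H, A α) ∩ ⋂ β ∈ K, (A β)ᶜ).Infinite)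
    (hyp : ∀ X : Set ℕ,
      (∀ H : Finset Ordinal, ↑H ⊆ Set.Iio (Cardinal.aleph 1).ord →
        (X ∩ ⋂ α ∈ H, A α).Nonempty) →
      ∃ γ < (Cardinal.aleph 1).ord, ∀ (s : Finset Ordinal) (g : Ordinal → Bool),
        ↑s ⊆ Set.Ico γ (Cardinal.aleph 1).ord → (X ∩ Lset A s g).Nonempty) :
    ∀ X : Set ℕ,
      (∀ H : Finset Ordinal, ↑H ⊆ Set.Iio (Cardinal.aleph 1).ord →
        (X ∩ ⋂ α ∈ H, A α).Nonempty) →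
      ∃ δ < (Cardinal.aleph 1).ord, ∃ φ : Ordinal → ℕ,
        (∀ k : ℕ, {α : Ordinal | α < δ ∧ φ α = k}.Finite) ∧
        ∀ (n : ℕ) (s : Finset Ordinal) (g : Ordinal → Bool),
          ↑s ⊆ Set.Ico δ (Cardinal.aleph 1).ord →
          (((⋂ α ∈ {α : Ordinal | α < δ ∧ φ α < n}, A α) \
              ⋂ α ∈ {α : Ordinal | α < δ ∧ φ α ≤ n}, A α) ∩
            Lset A s g ∩ X).Nonempty := by
  classical
  intro X hX
  set Ω := (Cardinal.aleph 1).ord with hΩdef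
  have hΩ0 : (0 : Ordinal) < Ω := by
    rw [hΩdef, Cardinal.lt_ord]; simpa using aleph_pos 1
  -- positivity of X intersected with finite intersections
  have hpos : ∀ H : Finset Ordinal, ↑H ⊆ Set.Iio Ω →
      ∀ H' : Finset Ordinal, ↑H' ⊆ Set.Iio Ω →
      ((X ∩ ⋂ α ∈ H, A α) ∩ ⋂ α ∈ H', A α).Nonempty := by
    intro H hH H' hH'
    obtain ⟨x, hx1, hx2⟩ := hX (H ∪ H') (by
      rw [Finset.coe_union]; exact Set.union_subset hH hH')
    simp only [Set.mem_iInter, Finset.mem_union] at hx2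
    exact ⟨x, ⟨⟨hx1, Set.mem_iInter₂.2 fun α hα => hx2 α (Or.inl hα)⟩,
      Set.mem_iInter₂.2 fun α hα => hx2 α (Or.inr hα)⟩⟩
  have hΓex : ∀ H : Finset Ordinal, ↑H ⊆ Set.Iio Ω →
      ∃ γ < Ω, ∀ (s : Finset Ordinal) (g : Ordinal → Bool),
        ↑s ⊆ Set.Ico γ Ω → ((X ∩ ⋂ α ∈ H, A α) ∩ Lset A s g).Nonempty :=
    fun H hH => hyp _ (hpos H hH)
  -- choice of a `γ` for each finite `H`
  let Γ : Finset Ordinal → Ordinal := fun H =>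
    if h : ↑H ⊆ Set.Iio Ω then (hΓex H h).choose else 0
  have hΓlt : ∀ H, Γ H < Ω := by
    intro H
    by_cases h : ↑H ⊆ Set.Iio Ω
    · simp only [Γ, dif_pos h]; exact (hΓex H h).choose_spec.1
    · simp only [Γ, dif_neg h]; exact hΩ0
  have hΓspec : ∀ H (h : ↑H ⊆ Set.Iio Ω) (s : Finset Ordinal) (g : Ordinal → Bool),
      ↑s ⊆ Set.Ico (Γ H) Ω → ((X ∩ ⋂ α ∈ H, A α) ∩ Lset A s g).Nonempty := by
    intro H h s g hs
    have : Γ H = (hΓex H h).choose := by simp only [Γ, dif_pos h]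
    exact (hΓex H h).choose_spec.2 s g (by rwa [this] at hs)
  -- a bound for all `Γ H` with `H` below a countable ordinal
  have hbd : ∀ β, β < Ω → ∃ b < Ω, ∀ H : Finset Ordinal, ↑H ⊆ Set.Iio β → Γ H ≤ b := by
    intro β hβ
    have hcnt : ({H : Finset Ordinal | ↑H ⊆ Set.Iio β}).Countable := by
      have h2 := Set.countable_setOf_finite_subset (countable_Iio_of_lt_ord hβ)
      refine Set.Countable.mono ?_ (h2.preimage Finset.coe_injective)
      intro H hH
      exact ⟨H.finite_toSet, hH⟩
    obtain ⟨b, hb1, hb2⟩ := exists_bound_of_countable (hcnt.image Γ)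
      (by rintro o ⟨H, _, rfl⟩; exact hΓlt H)
    exact ⟨b, hb1, fun H hH => hb2 _ ⟨H, hH, rfl⟩⟩
  choose! bd hbd1 hbd2 using hbd
  -- the fundamental sequence
  let gs : ℕ → Ordinal := fun k => Nat.rec 0 (fun _ γ => max (γ + 1) (bd γ)) k
  have hgs_lt : ∀ k, gs k < Ω := by
    intro k
    induction k with
    | zero => exact hΩ0
    | succ k ih =>
        refine max_lt ?_ (hbd1 _ ih)
        rw [Ordinal.add_one_eq_succ]
        exact (Cardinal.isSuccLimit_ord (Cardinal.aleph0_le_aleph 1)).succ_lt ih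
  have hgs_mono : ∀ k m : ℕ, k ≤ m → gs k ≤ gs m := by
    intro k m h
    induction m with
    | zero => simp [Nat.le_zero.1 h]
    | succ m ih =>
        rcases Nat.lt_or_ge k (m+1) with h' | h'
        · exact le_trans (ih (Nat.lt_succ_iff.1 h')) (le_trans (le_self_add)
            (le_max_left _ _))
        · have : k = m + 1 := le_antisymm h h'
          rw [this]
  -- the limit γ*
  let γs : Ordinal := ⨆ k, gs k
  have hγs_lt : γs < Ω := by
    refine Ordinal.iSup_lt_ord_lift ?_ hgs_lt
    rw [Cardinal.mk_nat, Cardinal.lift_aleph0, hΩdef, Cardinal.isRegular_aleph_one.cof_eq]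
    exact Cardinal.aleph0_lt_aleph_one
  have hgs_le : ∀ k, gs k ≤ γs := fun k => Ordinal.le_iSup gs k
  -- key property of γ*
  have keyP : ∀ H : Finset Ordinal, ↑H ⊆ Set.Iio γs →
      ∀ (s : Finset Ordinal) (g : Ordinal → Bool), ↑s ⊆ Set.Ico γs Ω →
      ((X ∩ ⋂ α ∈ H, A α) ∩ Lset A s g).Nonempty := by
    intro H hH s g hs
    have h1 : ∀ α : {x // x ∈ H}, ∃ k, (α : Ordinal) < gs k := by
      intro α
      have : (α : Ordinal) < γs := hH α.2
      exact Ordinal.lt_iSup_iff.1 this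
    choose fk hfk using h1
    obtain ⟨k, hk⟩ : ∃ k, ∀ α ∈ H, α < gs k := by
      refine ⟨Finset.univ.sup fk, fun α hα => ?_⟩
      exact lt_of_lt_of_le (hfk ⟨α, hα⟩)
        (hgs_mono _ _ (Finset.le_sup (Finset.mem_univ (⟨α, hα⟩ : {x // x ∈ H}))))
    have hΓle : Γ H ≤ γs :=
      le_trans (le_trans (hbd2 (gs k) (hgs_lt k) H (fun α hα => hk α hα))
        (le_max_right _ _)) (hgs_le (k+1))
    refine hΓspec H (fun α hα => lt_trans (hH hα) hγs_lt) s g ?_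
    intro α hα
    exact ⟨le_trans hΓle (hs hα).1, (hs hα).2⟩
  -- the injection of Iio γ* into ℕ
  have : Countable (Set.Iio γs) := (countable_Iio_of_lt_ord hγs_lt).to_subtype
  obtain ⟨e, he⟩ := Countable.exists_injective_nat (Set.Iio γs)
  -- δ and φ
  set δ : Ordinal := γs + Ordinal.omega0 with hδdef
  have hγsδ : γs ≤ δ := le_self_add
  have hδΩ : δ < Ω := by
    rw [hΩdef, Cardinal.lt_ord, hδdef, Ordinal.card_add, Ordinal.card_omega0]
    exact Cardinal.add_lt_of_lt Cardinal.aleph0_lt_aleph_one.le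
      (Cardinal.lt_ord.1 hγs_lt) Cardinal.aleph0_lt_aleph_one
  let φ : Ordinal → ℕ := fun α => if h : α < γs then e ⟨α, h⟩ else natOf (α - γs)
  have hladd_lt : ∀ m : ℕ, γs + (m : Ordinal) < δ := by
    intro m
    rw [hδdef]
    exact (add_lt_add_iff_left γs).2 (Ordinal.nat_lt_omega0 m)
  have hφ_ladder : ∀ m : ℕ, φ (γs + (m : Ordinal)) = m := by
    intro m
    have h1 : ¬ γs + (m : Ordinal) < γs := not_lt.2 (le_self_add)
    simp only [φ, dif_neg h1, Ordinal.add_sub_cancel, natOf_cast]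
  have hladder_eq : ∀ α, γs ≤ α → α < δ → α = γs + (φ α : Ordinal) := by
    intro α h1 h2
    have h3 : α - γs < Ordinal.omega0 :=
      Ordinal.sub_lt_of_lt_add (by rwa [← hδdef]) Ordinal.omega0_pos
    obtain ⟨m, hm⟩ := Ordinal.lt_omega0.1 h3
    have hφα : φ α = m := by
      simp only [φ, dif_neg (not_lt.2 h1), hm, natOf_cast]
    rw [hφα, ← hm, Ordinal.add_sub_cancel_of_le h1]
  have hfibγ : ∀ k : ℕ, {α : Ordinal | α < γs ∧ φ α = k}.Finite := by
    intro k
    refine Set.Subsingleton.finite ?_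
    rintro α ⟨hα1, hα2⟩ β ⟨hβ1, hβ2⟩
    have := he (a₁ := ⟨α, hα1⟩) (a₂ := ⟨β, hβ1⟩) (by
      have h1 : e ⟨α, hα1⟩ = φ α := by simp [φ, dif_pos hα1]
      have h2 : e ⟨β, hβ1⟩ = φ β := by simp [φ, dif_pos hβ1]
      rw [h1, h2, hα2, hβ2])
    exact congrArg Subtype.val this
  refine ⟨δ, hδΩ, φ, ?_, ?_⟩
  · -- fibers are finite
    intro k
    refine Set.Finite.subset ((hfibγ k).union (Set.finite_singleton (γs + (k : Ordinal))))
      (fun α hα => ?_)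
    obtain ⟨hαδ, hαk⟩ := hα
    by_cases h : α < γs
    · exact Or.inl ⟨h, hαk⟩
    · refine Or.inr ?_
      have := hladder_eq α (not_lt.1 h) hαδ
      rw [hαk] at this
      exact this
  · -- the main conclusion
    intro n s g hs
    -- the ladder finset
    let lad : Finset Ordinal := (Finset.range (n+1)).image (fun k : ℕ => γs + (k : Ordinal))
    have hlad_mem : ∀ m : ℕ, m ≤ n → γs + (m : Ordinal) ∈ lad := by
      intro m hm
      exact Finset.mem_image.2 ⟨m, Finset.mem_range.2 (Nat.lt_succ_of_le hm), rfl⟩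
    -- the low finite set
    have hHfin : {α : Ordinal | α < γs ∧ φ α < n}.Finite := by
      have hsub : {α : Ordinal | α < γs ∧ φ α < n} ⊆
          ⋃ k ∈ Set.Iio n, {α : Ordinal | α < γs ∧ φ α = k} := by
        rintro α ⟨h1, h2⟩
        exact Set.mem_biUnion (Set.mem_Iio.2 h2) ⟨h1, rfl⟩
      exact Set.Finite.subset ((Set.finite_Iio n).biUnion fun k _ => hfibγ k) hsub
    let H : Finset Ordinal := hHfin.toFinset
    have hHsub : ↑H ⊆ Set.Iio γs := by
      intro α hα
      rw [Finset.mem_coe, Set.Finite.mem_toFinset] at hα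
      exact hα.1
    -- the modified function g'
    let g' : Ordinal → Bool := fun α =>
      if γs ≤ α ∧ α < δ then (if α = γs + (n : Ordinal) then false else true) else g α
    have hs' : ↑(s ∪ lad) ⊆ Set.Ico γs Ω := by
      rw [Finset.coe_union]
      refine Set.union_subset (fun α hα => ⟨le_trans hγsδ (hs hα).1, (hs hα).2⟩) ?_
      intro α hα
      simp only [lad, Finset.coe_image, Set.mem_image, Finset.mem_coe,
        Finset.mem_range] at hα
      obtain ⟨m, _, rfl⟩ := hα
      exact ⟨le_self_add, lt_trans (hladd_lt m) hδΩ⟩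
    obtain ⟨x, ⟨hxX, hxH⟩, hxL⟩ := keyP H hHsub (s ∪ lad) g' hs'
    have hxA : ∀ α, α < γs → φ α < n → x ∈ A α := by
      intro α h1 h2
      refine Set.mem_iInter₂.1 hxH α ?_
      rw [Set.Finite.mem_toFinset]
      exact ⟨h1, h2⟩
    have hxLad : ∀ α ∈ lad, x ∈ pw (A α) (g' α) := by
      intro α hα
      exact Set.mem_iInter₂.1 hxL α (Finset.mem_union_right s hα)
    refine ⟨x, ⟨⟨?_, ?_⟩, ?_⟩, hxX⟩
    · -- x ∈ ⋂ {α < δ, φ α < n}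
      refine Set.mem_iInter₂.2 ?_
      rintro α ⟨hαδ, hαn⟩
      by_cases h : α < γs
      · exact hxA α h hαn
      · have hα_eq := hladder_eq α (not_lt.1 h) hαδ
        have hmem : α ∈ lad := by
          rw [hα_eq]; exact hlad_mem _ (le_of_lt hαn)
        have hne : α ≠ γs + (n : Ordinal) := by
          rw [hα_eq]
          intro hcon
          have heq : γs + (φ α : Ordinal) = γs + (n : Ordinal) := hcon
          have : (φ α : Ordinal) = (n : Ordinal) :=
            le_antisymm ((add_le_add_iff_left γs).1 heq.le)
              ((add_le_add_iff_left γs).1 heq.ge)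
          exact absurd (by exact_mod_cast this) (Nat.ne_of_lt hαn)
        have hg' : g' α = true := by
          have hcond : γs ≤ α ∧ α < δ := ⟨not_lt.1 h, hαδ⟩
          simp [g', hcond, hne]
        have := hxLad α hmem
        rw [hg'] at this
        simpa [pw] using this
    · -- x ∉ ⋂ {α < δ, φ α ≤ n}
      intro hcon
      have hβδ : γs + (n : Ordinal) < δ := hladd_lt n
      have hxβ : x ∈ A (γs + (n : Ordinal)) := by
        refine Set.mem_iInter₂.1 hcon (γs + (n : Ordinal)) ?_
        exact ⟨hβδ, le_of_eq (hφ_ladder n)⟩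
      have hg' : g' (γs + (n : Ordinal)) = false := by
        have hcond : γs ≤ γs + (n : Ordinal) ∧ γs + (n : Ordinal) < δ :=
          ⟨le_self_add, hβδ⟩
        simp [g', hcond]
      have := hxLad _ (hlad_mem n le_rfl)
      rw [hg'] at this
      simp only [pw, if_neg Bool.false_ne_true] at this
      exact this hxβ
    · -- x ∈ Lset A s g
      refine Set.mem_iInter₂.2 fun α hα => ?_
      have h1 : x ∈ pw (A α) (g' α) :=
        Set.mem_iInter₂.1 hxL α (Finset.mem_union_left lad hα)
      have h2 : g' α = g α := by
        have : ¬ (γs ≤ α ∧ α < δ) := by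
          rintro ⟨-, hlt⟩
          exact absurd (hs hα).1 (not_le.2 hlt)
        simp only [g', if_neg this]
      rwa [h2] at h1
end

section
/- Let F be a filter on ℕ and let T₃' be the space with underlying set (ℕ × (ℕ ∪ {ω})) ∪ {∞}, where points of ℕ × ℕ are isolated, each ⟨n, ω⟩ has neighborhood base {n} × (F₀ ∪ {ω}) for F₀ ∈ F, and a neighborhood of ∞ consists of ∞ together with neighborhoods of ⟨n, ω⟩ for all n in some member of F. If F is not an ultrafilter, then there exists a subspace X of T₃' of Cantor–Bendixson rank 3 that is not homeomorphic to T₃'; hence T₃' is not 3-Toronto. -/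
/-- The underlying set of the space `T₃' = (ℕ × (ℕ ∪ {ω})) ∪ {∞}`:
`none` is `∞`, `some (n, none)` is `⟨n, ω⟩`, and `some (n, some m)` is `⟨n, m⟩`. -/
def T3Carrier : Type := Option (ℕ × Option ℕ)

/-- The topology of `T₃'`: points `⟨n, m⟩` of `ℕ × ℕ` are isolated, `⟨n, ω⟩` has
neighborhood base `{n} × (F₀ ∪ {ω})` for `F₀ ∈ F`, and a neighborhood of `∞` consists of
`∞` together with neighborhoods of `⟨n, ω⟩` for all `n` in some member of `F`. -/
def t3Top (F : Filter ℕ) : TopologicalSpace T3Carrier where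
  IsOpen U :=
    (∀ n : ℕ, Option.some (n, Option.none) ∈ U →
      ∃ F₁ ∈ F, ∀ m ∈ F₁, Option.some (n, Option.some m) ∈ U) ∧
    (Option.none ∈ U → ∃ F₀ ∈ F, ∀ n ∈ F₀, Option.some (n, Option.none) ∈ U)
  isOpen_univ := ⟨fun _ _ => ⟨Set.univ, Filter.univ_mem, fun _ _ => trivial⟩,
    fun _ => ⟨Set.univ, Filter.univ_mem, fun _ _ => trivial⟩⟩
  isOpen_inter := by
    rintro U V ⟨hU1, hU2⟩ ⟨hV1, hV2⟩
    constructor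
    · intro n hn
      obtain ⟨F₁, h₁, g₁⟩ := hU1 n hn.1
      obtain ⟨F₂, h₂, g₂⟩ := hV1 n hn.2
      exact ⟨F₁ ∩ F₂, Filter.inter_mem h₁ h₂, fun m hm => ⟨g₁ m hm.1, g₂ m hm.2⟩⟩
    · intro hn
      obtain ⟨F₁, h₁, g₁⟩ := hU2 hn.1
      obtain ⟨F₂, h₂, g₂⟩ := hV2 hn.2
      exact ⟨F₁ ∩ F₂, Filter.inter_mem h₁ h₂, fun n hn' => ⟨g₁ n hn'.1, g₂ n hn'.2⟩⟩
  isOpen_sUnion := by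
    intro S hS
    constructor
    · intro n hn
      obtain ⟨U, hU, hnU⟩ := hn
      obtain ⟨F₁, h₁, g₁⟩ := (hS U hU).1 n hnU
      exact ⟨F₁, h₁, fun m hm => ⟨U, hU, g₁ m hm⟩⟩
    · intro hn
      obtain ⟨U, hU, hnU⟩ := hn
      obtain ⟨F₀, h₀, g₀⟩ := (hS U hU).2 hnU
      exact ⟨F₀, h₀, fun n hn' => ⟨U, hU, g₀ n hn'⟩⟩

/-- The `α`-th Cantor–Bendixson derivative of a space: `X⁰ = X`, `X^{α+1}` is the set of
non-isolated points of `X^α`, with intersections at limits.  Equivalently (since the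
derivatives are decreasing), `X^α = ⋂_{β<α} D(X^β)` where `D(S)` is the set of points of
`S` that lie in the closure of `S` minus themselves. -/
noncomputable def cbDeriv (X : Type*) [TopologicalSpace X] : Ordinal → Set X :=
  Ordinal.lt_wf.fix (C := fun _ => Set X) fun α ih =>
    ⋂ β : {β // β < α}, {x | x ∈ ih β.1 β.2 ∧ x ∈ closure (ih β.1 β.2 \ {x})}

/-- `X` is scattered of Cantor–Bendixson rank exactly `α`. -/
def HasCBRank (X : Type*) [TopologicalSpace X] (α : Ordinal) : Prop :=
  cbDeriv X α = ∅ ∧ ∀ β < α, cbDeriv X β ≠ ∅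

section CB

def dSet {X : Type*} [TopologicalSpace X] (S : Set X) : Set X :=
  {x | x ∈ S ∧ x ∈ closure (S \ {x})}

lemma dSet_subset {X : Type*} [TopologicalSpace X] (S : Set X) : dSet S ⊆ S := fun _ h => h.1

lemma dSet_mono {X : Type*} [TopologicalSpace X] {S T : Set X} (h : S ⊆ T) : dSet S ⊆ dSet T :=
  fun _ hx => ⟨h hx.1, closure_mono (Set.diff_subset_diff_left h) hx.2⟩

lemma cbDeriv_eq (X : Type*) [TopologicalSpace X] (α : Ordinal) :
    cbDeriv X α = ⋂ β : {β // β < α}, dSet (cbDeriv X β.1) := by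
  rw [cbDeriv, Ordinal.lt_wf.fix_eq]
  rfl

lemma cbDeriv_antitone (X : Type*) [TopologicalSpace X] : Antitone (cbDeriv X) := by
  intro α γ h
  rw [cbDeriv_eq X α, cbDeriv_eq X γ]
  intro x hx
  simp only [Set.mem_iInter] at hx ⊢
  exact fun β => hx ⟨β.1, lt_of_lt_of_le β.2 h⟩

lemma cbDeriv_zero (X : Type*) [TopologicalSpace X] : cbDeriv X 0 = Set.univ := by
  rw [cbDeriv_eq]
  simp [not_lt_zero]

lemma cbDeriv_succ (X : Type*) [TopologicalSpace X] (α : Ordinal) :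
    cbDeriv X (α + 1) = dSet (cbDeriv X α) := by
  rw [cbDeriv_eq]
  apply subset_antisymm
  · exact Set.iInter_subset (fun β : {β // β < α + 1} => dSet (cbDeriv X β.1))
      ⟨α, by rw [Ordinal.add_one_eq_succ]; exact Order.lt_succ α⟩
  · intro x hx
    simp only [Set.mem_iInter]
    rintro ⟨β, hβ⟩
    have : β ≤ α := by rwa [Ordinal.add_one_eq_succ, Order.lt_succ_iff] at hβ
    exact dSet_mono (cbDeriv_antitone X this) hx

lemma dSet_image {Y Z : Type*} [TopologicalSpace Y] [TopologicalSpace Z] (e : Y ≃ₜ Z)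
    (S : Set Y) : e '' dSet S = dSet (e '' S) := by
  ext z
  obtain ⟨y, rfl⟩ := e.surjective z
  simp only [dSet, Set.mem_image, Set.mem_setOf_eq]
  constructor
  · rintro ⟨y', ⟨h1, h2⟩, hy⟩
    rw [← hy]
    refine ⟨⟨y', h1, rfl⟩, ?_⟩
    rw [← Set.image_singleton, ← Set.image_diff e.injective, ← e.image_closure]
    exact ⟨y', h2, rfl⟩
  · rintro ⟨⟨y', h1, hy⟩, h2⟩
    refine ⟨y', ⟨h1, ?_⟩, hy⟩
    rw [← hy, ← Set.image_singleton, ← Set.image_diff e.injective, ← e.image_closure] at h2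
    obtain ⟨w, hw, hwy⟩ := h2
    cases e.injective hwy
    exact hw

/-- If `F` is not an ultrafilter, then `T₃'` has a subspace of Cantor–Bendixson rank 3
which is not homeomorphic to `T₃'`; hence `T₃'` is not 3-Toronto. -/
theorem t3'_not_three_toronto (F : Filter ℕ)
    (hF : ¬ ∀ A : Set ℕ, A ∈ F ∨ Aᶜ ∈ F) :
    letI : TopologicalSpace T3Carrier := t3Top F
    ∃ X : Set T3Carrier, HasCBRank X 3 ∧ ¬ Nonempty (X ≃ₜ T3Carrier) := by
  classical
  letI : TopologicalSpace T3Carrier := t3Top F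
  push_neg at hF
  obtain ⟨A, hA, hAc⟩ := hF
  haveI hne : F.NeBot := ⟨fun h => hA (by rw [h]; exact Filter.mem_bot)⟩
  -- discrimination helpers
  have hne1 : ∀ (p : ℕ × Option ℕ), (Option.some p : T3Carrier) ≠ Option.none :=
    fun p h => Option.some_ne_none p h
  have hne2 : ∀ (p : ℕ × Option ℕ), (Option.none : T3Carrier) ≠ Option.some p :=
    fun p h => Option.some_ne_none p h.symm
  have hne3 : ∀ (n n' m : ℕ),
      (Option.some (n, Option.some m) : T3Carrier) ≠ Option.some (n', Option.none) :=
    fun n n' m h => Option.some_ne_none m (congrArg Prod.snd (Option.some.inj h))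
  have hne4 : ∀ (n n' m : ℕ),
      (Option.some (n, Option.none) : T3Carrier) ≠ Option.some (n', Option.some m) :=
    fun n n' m h => Option.some_ne_none m (congrArg Prod.snd (Option.some.inj h)).symm
  have hfst : ∀ (n n' : ℕ) (y y' : Option ℕ),
      (Option.some (n, y) : T3Carrier) = Option.some (n', y') → n = n' :=
    fun n n' y y' h => congrArg Prod.fst (Option.some.inj h)
  have hopen : ∀ U : Set T3Carrier,
      ((∀ n : ℕ, Option.some (n, Option.none) ∈ U →
        ∃ F₁ ∈ F, ∀ m ∈ F₁, Option.some (n, Option.some m) ∈ U) ∧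
      (Option.none ∈ U → ∃ F₀ ∈ F, ∀ n ∈ F₀, Option.some (n, Option.none) ∈ U)) → IsOpen U :=
    fun _ h => h
  have hopen' : ∀ U : Set T3Carrier, IsOpen U →
      ((∀ n : ℕ, Option.some (n, Option.none) ∈ U →
        ∃ F₁ ∈ F, ∀ m ∈ F₁, Option.some (n, Option.some m) ∈ U) ∧
      (Option.none ∈ U → ∃ F₀ ∈ F, ∀ n ∈ F₀, Option.some (n, Option.none) ∈ U)) :=
    fun _ h => h
  -- basic open sets
  have hcol : ∀ n : ℕ, IsOpen {x : T3Carrier | ∃ y, x = Option.some (n, y)} := by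
    intro n
    refine hopen _ ⟨?_, ?_⟩
    · rintro n' ⟨y, hy⟩
      have h1 : n' = n := hfst _ _ _ _ hy
      subst h1
      exact ⟨Set.univ, Filter.univ_mem, fun m _ => ⟨Option.some m, rfl⟩⟩
    · rintro ⟨y, hy⟩
      exact absurd hy (hne2 _)
  have hsing : ∀ n m : ℕ, IsOpen ({Option.some (n, Option.some m)} : Set T3Carrier) := by
    intro n m
    refine hopen _ ⟨?_, ?_⟩
    · intro n' h
      exact absurd h (hne4 _ _ _)
    · intro h
      exact absurd h (hne2 _)
  -- the subspace
  set X : Set T3Carrier := {x | ∀ n : ℕ, x = Option.some (n, Option.none) → n ∈ A} with hXdef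
  have hXnone : (Option.none : T3Carrier) ∈ X := by
    intro n h
    exact absurd h (hne2 _)
  have hXmm : ∀ n m : ℕ, (Option.some (n, Option.some m) : T3Carrier) ∈ X := by
    intro n m n' h
    exact absurd h (hne3 _ _ _)
  have hXA : ∀ n ∈ A, (Option.some (n, Option.none) : T3Carrier) ∈ X := by
    intro n hn n' h
    rwa [← hfst _ _ _ _ h]
  have hsubopen : ∀ V : Set ↥X, IsOpen V →
      ∃ U : Set T3Carrier, IsOpen U ∧ V = Subtype.val ⁻¹' U := by
    intro V hV
    obtain ⟨U, hU, h⟩ := isOpen_induced_iff.1 hV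
    exact ⟨U, hU, h.symm⟩
  have hpre : ∀ U : Set T3Carrier, IsOpen U → IsOpen (Subtype.val ⁻¹' U : Set ↥X) :=
    fun _ h => h.preimage continuous_subtype_val
  -- Cantor-Bendixson computations in T3'
  have hD1T : dSet (Set.univ : Set T3Carrier) =
      {x | x = Option.none ∨ ∃ n : ℕ, x = Option.some (n, Option.none)} := by
    ext x
    obtain _ | ⟨n, _ | m⟩ := x
    · refine ⟨fun _ => Or.inl rfl, fun _ => ⟨trivial, ?_⟩⟩
      refine mem_closure_iff.2 ?_
      intro o ho hno
      obtain ⟨F₀, hF₀, hg⟩ := (hopen' o ho).2 hno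
      obtain ⟨n, hn⟩ := Filter.nonempty_of_mem hF₀
      exact ⟨Option.some (n, Option.none), hg n hn, trivial, hne1 _⟩
    · refine ⟨fun _ => Or.inr ⟨n, rfl⟩, fun _ => ⟨trivial, ?_⟩⟩
      refine mem_closure_iff.2 ?_
      intro o ho hxo
      obtain ⟨F₁, hF₁, hg⟩ := (hopen' o ho).1 n hxo
      obtain ⟨m, hm⟩ := Filter.nonempty_of_mem hF₁
      exact ⟨Option.some (n, Option.some m), hg m hm, trivial, hne3 _ _ _⟩
    · constructor
      · rintro ⟨-, hc⟩
        obtain ⟨z, hz1, hz2⟩ := mem_closure_iff.1 hc _ (hsing n m) rfl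
        exact absurd hz1 hz2.2
      · rintro (h | ⟨n', h⟩)
        · exact absurd h (hne1 _)
        · exact absurd h (hne3 _ _ _)
  have hD2T : dSet {x : T3Carrier | x = Option.none ∨ ∃ n : ℕ, x = Option.some (n, Option.none)}
      = {Option.none} := by
    ext x
    obtain _ | ⟨n, _ | m⟩ := x
    · refine ⟨fun _ => rfl, fun _ => ⟨Or.inl rfl, ?_⟩⟩
      refine mem_closure_iff.2 ?_
      intro o ho hno
      obtain ⟨F₀, hF₀, hg⟩ := (hopen' o ho).2 hno
      obtain ⟨n, hn⟩ := Filter.nonempty_of_mem hF₀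
      exact ⟨Option.some (n, Option.none), hg n hn, Or.inr ⟨n, rfl⟩, hne1 _⟩
    · constructor
      · rintro ⟨-, hc⟩
        exfalso
        obtain ⟨z, hz1, hz2⟩ := mem_closure_iff.1 hc _ (hcol n) ⟨Option.none, rfl⟩
        obtain ⟨y, rfl⟩ := hz1
        rcases hz2.1 with h | ⟨n', h⟩
        · exact hne1 _ h
        · injection Option.some.inj h with h1 h2
          subst h2
          exact hz2.2 rfl
      · intro h
        exact absurd h (hne1 _)
    · constructor
      · rintro ⟨h, -⟩
        rcases h with h | ⟨n', h⟩
        · exact absurd h (hne1 _)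
        · exact absurd h (hne3 _ _ _)
      · intro h
        exact absurd h (hne1 _)
  -- Cantor-Bendixson computations in the subspace X
  have hD1X : dSet (Set.univ : Set ↥X) =
      {p : ↥X | p.1 = Option.none ∨ ∃ n : ℕ, p.1 = Option.some (n, Option.none)} := by
    ext p
    obtain ⟨x, hx⟩ := p
    obtain _ | ⟨n, _ | m⟩ := x
    · refine ⟨fun _ => Or.inl rfl, fun _ => ⟨trivial, ?_⟩⟩
      rw [mem_closure_iff]
      intro o ho hno
      obtain ⟨U, hU, rfl⟩ := hsubopen o ho
      obtain ⟨F₀, hF₀, hg⟩ := (hopen' U hU).2 hno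
      obtain ⟨n, hn⟩ := Filter.nonempty_of_mem hF₀
      obtain ⟨F₁, hF₁, hg1⟩ := (hopen' U hU).1 n (hg n hn)
      obtain ⟨m, hm⟩ := Filter.nonempty_of_mem hF₁
      exact ⟨⟨Option.some (n, Option.some m), hXmm n m⟩, hg1 m hm, trivial,
        fun h => hne1 _ (congrArg Subtype.val h)⟩
    · refine ⟨fun _ => Or.inr ⟨n, rfl⟩, fun _ => ⟨trivial, ?_⟩⟩
      rw [mem_closure_iff]
      intro o ho hpo
      obtain ⟨U, hU, rfl⟩ := hsubopen o ho
      obtain ⟨F₁, hF₁, hg1⟩ := (hopen' U hU).1 n hpo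
      obtain ⟨m, hm⟩ := Filter.nonempty_of_mem hF₁
      exact ⟨⟨Option.some (n, Option.some m), hXmm n m⟩, hg1 m hm, trivial,
        fun h => hne3 _ _ _ (congrArg Subtype.val h)⟩
    · have hop : IsOpen ({⟨Option.some (n, Option.some m), hx⟩} : Set ↥X) := by
        have h1 := hpre _ (hsing n m)
        have h2 : (Subtype.val ⁻¹' ({Option.some (n, Option.some m)} : Set T3Carrier) : Set ↥X)
            = {⟨Option.some (n, Option.some m), hx⟩} := by
          ext q
          exact ⟨fun h => Subtype.ext h, fun h => congrArg Subtype.val h⟩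
        rwa [h2] at h1
      constructor
      · rintro ⟨-, hc⟩
        obtain ⟨z, hz1, hz2⟩ := mem_closure_iff.1 hc _ hop rfl
        exact absurd hz1 hz2.2
      · rintro (h | ⟨n', h⟩)
        · exact absurd h (hne1 _)
        · exact absurd h (hne3 _ _ _)
  have hD2X : dSet {p : ↥X | p.1 = Option.none ∨ ∃ n : ℕ, p.1 = Option.some (n, Option.none)}
      = {p : ↥X | p.1 = Option.none} := by
    ext p
    obtain ⟨x, hx⟩ := p
    obtain _ | ⟨n, _ | m⟩ := x
    · refine ⟨fun _ => rfl, fun _ => ⟨Or.inl rfl, ?_⟩⟩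
      rw [mem_closure_iff]
      intro o ho hno
      obtain ⟨U, hU, rfl⟩ := hsubopen o ho
      obtain ⟨F₀, hF₀, hg⟩ := (hopen' U hU).2 hno
      obtain ⟨n, hnF₀, hnA⟩ : ∃ n, n ∈ F₀ ∧ n ∈ A := by
        by_contra hcon
        push_neg at hcon
        exact hAc (F.mem_of_superset hF₀ (fun n hn => hcon n hn))
      exact ⟨⟨Option.some (n, Option.none), hXA n hnA⟩, hg n hnF₀, Or.inr ⟨n, rfl⟩,
        fun h => hne1 _ (congrArg Subtype.val h)⟩
    · constructor
      · rintro ⟨-, hc⟩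
        exfalso
        obtain ⟨z, hz1, hz2⟩ :=
          mem_closure_iff.1 hc _ (hpre _ (hcol n)) ⟨Option.none, rfl⟩
        obtain ⟨y, hy⟩ := hz1
        rcases hz2.1 with h | ⟨n', h⟩
        · exact hne2 _ (h.symm.trans hy)
        · have h3 := h.symm.trans hy
          injection Option.some.inj h3 with h1 h2
          exact hz2.2 (Subtype.ext (by rw [h, h1]))
      · intro h
        exact absurd h (hne1 _)
    · constructor
      · rintro ⟨h, -⟩
        rcases h with h | ⟨n', h⟩
        · exact absurd h (hne1 _)
        · exact absurd h (hne3 _ _ _)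
      · intro h
        exact absurd h (hne1 _)
  have hD3X : dSet {p : ↥X | p.1 = Option.none} = ∅ := by
    ext p
    constructor
    · rintro ⟨h1, h2⟩
      have hdiff : {q : ↥X | q.1 = Option.none} \ {p} = ∅ := by
        ext q
        constructor
        · rintro ⟨hq, hqp⟩
          exact absurd (Subtype.ext (hq.trans h1.symm)) hqp
        · exact fun h => h.elim
      rw [hdiff, closure_empty] at h2
      exact h2
    · exact fun h => h.elim
  -- ordinal arithmetic
  have h1 : (1 : Ordinal) = 0 + 1 := by norm_num
  have h2 : (2 : Ordinal) = 1 + 1 := by norm_num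
  have h3 : (3 : Ordinal) = 2 + 1 := by norm_num
  have hcb1 : cbDeriv ↥X 1 = {p : ↥X | p.1 = Option.none ∨ ∃ n : ℕ,
      p.1 = Option.some (n, Option.none)} := by
    rw [h1, cbDeriv_succ, cbDeriv_zero, hD1X]
  have hcb2 : cbDeriv ↥X 2 = {p : ↥X | p.1 = Option.none} := by
    rw [h2, cbDeriv_succ, hcb1, hD2X]
  have hcb3 : cbDeriv ↥X 3 = ∅ := by
    rw [h3, cbDeriv_succ, hcb2, hD3X]
  refine ⟨X, ⟨hcb3, ?_⟩, ?_⟩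
  · intro β hβ hempty
    have hβ2 : β ≤ 2 := by
      rwa [h3, Ordinal.add_one_eq_succ, Order.lt_succ_iff] at hβ
    have hmem : (⟨Option.none, hXnone⟩ : ↥X) ∈ cbDeriv ↥X β :=
      cbDeriv_antitone ↥X hβ2 (by rw [hcb2]; exact rfl)
    rw [hempty] at hmem
    exact hmem
  · rintro ⟨e⟩
    have himuniv : e '' (Set.univ : Set ↥X) = Set.univ := by
      rw [Set.image_univ]
      exact e.surjective.range_eq
    have him1 : e '' dSet (Set.univ : Set ↥X) = dSet (Set.univ : Set T3Carrier) := by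
      rw [dSet_image, himuniv]
    have him2 : e '' dSet (dSet (Set.univ : Set ↥X))
        = dSet (dSet (Set.univ : Set T3Carrier)) := by
      rw [dSet_image, him1]
    set pinf : ↥X := ⟨Option.none, hXnone⟩ with hpinfdef
    have hS2single : dSet (dSet (Set.univ : Set ↥X)) = {pinf} := by
      rw [hD1X, hD2X]
      ext q
      exact ⟨fun h => Subtype.ext h, fun h => by rw [h]; exact rfl⟩
    have hD12T : dSet (dSet (Set.univ : Set T3Carrier)) = {Option.none} := by
      rw [hD1T]
      exact hD2T
    have hepinf : e pinf = Option.none := by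
      have h := him2
      rw [hS2single, hD12T, Set.image_singleton] at h
      exact Set.singleton_eq_singleton_iff.1 h
    have hS1im : e '' {p : ↥X | p.1 = Option.none ∨ ∃ n : ℕ, p.1 = Option.some (n, Option.none)}
        = {x : T3Carrier | x = Option.none ∨ ∃ n : ℕ, x = Option.some (n, Option.none)} := by
      rw [← hD1X, him1, hD1T]
      rfl
    -- the distinguishing closed set
    set C : Set ↥X := {p : ↥X | p.1 = Option.none ∨
      ∃ n m : ℕ, n ∉ A ∧ p.1 = Option.some (n, Option.some m)} with hCdef
    have hCclosed : IsClosed C := by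
      have hV : IsOpen {x : T3Carrier | ∃ n ∈ A, ∃ y, x = Option.some (n, y)} := by
        refine hopen _ ⟨?_, ?_⟩
        · rintro n ⟨n', hn', y, hy⟩
          have h1 : n = n' := hfst _ _ _ _ hy
          subst h1
          exact ⟨Set.univ, Filter.univ_mem, fun m _ => ⟨n, hn', Option.some m, rfl⟩⟩
        · rintro ⟨n', -, y, hy⟩
          exact absurd hy (hne2 _)
      have hcompl : Cᶜ
          = Subtype.val ⁻¹' {x : T3Carrier | ∃ n ∈ A, ∃ y, x = Option.some (n, y)} := by
        ext p
        obtain ⟨x, hx⟩ := p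
        obtain _ | ⟨n, _ | m⟩ := x
        · constructor
          · intro h
            exact absurd (Or.inl rfl) h
          · rintro ⟨n', -, y, hy⟩
            exact absurd hy (hne2 _)
        · constructor
          · intro _
            exact ⟨n, hx n rfl, Option.none, rfl⟩
          · rintro - (h | ⟨n', m', -, h⟩)
            · exact hne1 _ h
            · exact hne4 _ _ _ h
        · constructor
          · intro h
            refine ⟨n, ?_, Option.some m, rfl⟩
            by_contra hn
            exact h (Or.inr ⟨n, m, hn, rfl⟩)
          · rintro ⟨n', hn', y, hy⟩ (h | ⟨n'', m'', hn'', h⟩)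
            · exact hne1 _ h
            · have e1 : n = n' := hfst _ _ _ _ hy
              have e2 : n = n'' := hfst _ _ _ _ h
              exact hn'' (by rw [← e2, e1]; exact hn')
      rw [← isOpen_compl_iff, hcompl]
      exact hpre _ hV
    have hCpinf : pinf ∈ C := Or.inl rfl
    have hCS1 : ∀ p ∈ C, (p.1 = Option.none ∨ ∃ n : ℕ, p.1 = Option.some (n, Option.none)) →
        p = pinf := by
      intro p hp hp1
      rcases hp with h | ⟨n, m, hnA, h⟩
      · exact Subtype.ext h
      · exfalso
        rcases hp1 with h' | ⟨n', h'⟩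
        · exact hne1 _ (h ▸ h')
        · exact hne3 _ _ _ (h ▸ h')
    have hCacc : pinf ∈ closure (C \ {pinf}) := by
      rw [mem_closure_iff]
      intro o ho hpo
      obtain ⟨U, hU, rfl⟩ := hsubopen o ho
      obtain ⟨F₀, hF₀, hg⟩ := (hopen' U hU).2 hpo
      obtain ⟨n, hnF₀, hnA⟩ : ∃ n, n ∈ F₀ ∧ n ∉ A := by
        by_contra hcon
        push_neg at hcon
        exact hA (F.mem_of_superset hF₀ (fun n hn => hcon n hn))
      obtain ⟨F₁, hF₁, hg1⟩ := (hopen' U hU).1 n (hg n hnF₀)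
      obtain ⟨m, hm⟩ := Filter.nonempty_of_mem hF₁
      exact ⟨⟨Option.some (n, Option.some m), hXmm n m⟩, hg1 m hm,
        Or.inr ⟨n, m, hnA, rfl⟩, fun h => hne1 _ (congrArg Subtype.val h)⟩
    set C' : Set T3Carrier := e '' C with hC'def
    have hC'closed : IsClosed C' := e.isClosedMap C hCclosed
    have hC'no1 : ∀ n : ℕ, Option.some (n, Option.none) ∉ C' := by
      rintro n ⟨p, hp, hep⟩
      have hmem : e p ∈ {x : T3Carrier | x = Option.none ∨
          ∃ n' : ℕ, x = Option.some (n', Option.none)} := by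
        rw [hep]
        exact Or.inr ⟨n, rfl⟩
      rw [← hS1im] at hmem
      obtain ⟨q, hq, heq⟩ := hmem
      cases e.injective heq
      have hppinf := hCS1 _ hp hq
      rw [hppinf, hepinf] at hep
      exact hne2 _ hep
    have hC'acc : Option.none ∈ closure (C' \ {Option.none}) := by
      have hdiff : C' \ {Option.none} = e '' (C \ {pinf}) := by
        rw [Set.image_diff e.injective, Set.image_singleton, hepinf]
        rfl
      rw [hdiff, ← e.image_closure]
      exact ⟨pinf, hCacc, hepinf⟩
    choose f hfF hf using fun n => (hopen' _ hC'closed.isOpen_compl).1 n (hC'no1 n)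
    have hWopen : IsOpen (insert Option.none {x : T3Carrier |
        (∃ n : ℕ, x = Option.some (n, Option.none)) ∨
        ∃ n m : ℕ, m ∈ f n ∧ x = Option.some (n, Option.some m)}) := by
      refine hopen _ ⟨?_, ?_⟩
      · intro n _
        exact ⟨f n, hfF n, fun m hm => Or.inr (Or.inr ⟨n, m, hm, rfl⟩)⟩
      · intro _
        exact ⟨Set.univ, Filter.univ_mem, fun n _ => Or.inr (Or.inl ⟨n, rfl⟩)⟩
    have hstep := (mem_closure_iff (s := C' \ {Option.none})).1 hC'acc
    obtain ⟨z, hzW, hzC', hzne⟩ := hstep _ hWopen (Or.inl rfl)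
    rcases hzW with rfl | (⟨n, rfl⟩ | ⟨n, m, hm, rfl⟩)
    · exact hzne rfl
    · exact hC'no1 n hzC'
    · exact hf n m hm hzC'

end CB
end

section
/- Let F be a filter on ℕ which is homogeneous, isomorphic to F × ℕ, and not the cofinite filter, and let T_α be the associated scattered spaces (T₀ = ∅, T₁ a point, T_{α+1} = ({n} × T_α)ₙ ∪_F {∞}, T_α = ⊕_{β<α} T_β for limit α). Then for every ordinal α, T_α is homeomorphic to the topological sum of T_α with ⊕_{n∈ℕ} X_n, whenever each X_n is homeomorphic to some T_{β_n} with β_n < α. -/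
/-- The topology of the space `(Xᵢ)ᵢ ∪_G {∞}`: each fiber `Xᵢ` is clopen with its own
topology (`some ⟨i, x⟩` is the point `x` of `Xᵢ`), and a set containing the extra point
`∞ = none` is open iff it contains all fibers indexed by some member of the filter `G`. -/
def fSum {I : Type*} (G : Filter I) (X : I → Type*) [∀ i, TopologicalSpace (X i)] :
    TopologicalSpace (Option (Σ i, X i)) where
  IsOpen U := (∀ i, IsOpen {x : X i | Option.some ⟨i, x⟩ ∈ U}) ∧
    (Option.none ∈ U → ∃ F₀ ∈ G, ∀ i ∈ F₀, ∀ x : X i, Option.some ⟨i, x⟩ ∈ U)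
  isOpen_univ := ⟨fun _ => isOpen_univ, fun _ => ⟨Set.univ, Filter.univ_mem, by simp⟩⟩
  isOpen_inter := by
    rintro U V ⟨hU1, hU2⟩ ⟨hV1, hV2⟩
    refine ⟨fun i => (hU1 i).inter (hV1 i), fun h => ?_⟩
    obtain ⟨F₀, hF₀, h1⟩ := hU2 h.1
    obtain ⟨F₁, hF₁, h2⟩ := hV2 h.2
    exact ⟨F₀ ∩ F₁, Filter.inter_mem hF₀ hF₁, fun i hi x => ⟨h1 i hi.1 x, h2 i hi.2 x⟩⟩
  isOpen_sUnion := by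
    intro S hS
    refine ⟨fun i => ?_, fun h => ?_⟩
    · have : {x : X i | Option.some ⟨i, x⟩ ∈ ⋃₀ S} =
        ⋃ U ∈ S, {x : X i | Option.some ⟨i, x⟩ ∈ U} := by
        ext x; simp [Set.mem_sUnion]
      rw [this]
      exact isOpen_biUnion fun U hU => (hS U hU).1 i
    · obtain ⟨U, hU, hnU⟩ := h
      obtain ⟨F₀, hF₀, h'⟩ := (hS U hU).2 hnU
      exact ⟨F₀, hF₀, fun i hi x => ⟨U, hU, h' i hi x⟩⟩

/-- The filter `F × ℕ` on `ℕ × ℕ`, generated by the sets `F₀ × ℕ` with `F₀ ∈ F`. -/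
def prodNatFilter (F : Filter ℕ) : Filter (ℕ × ℕ) :=
  Filter.generate {s | ∃ F₀ ∈ F, s = F₀ ×ˢ (Set.univ : Set ℕ)}


open Set Filter Topology

section Helpers

variable {X Y : Type*}

/-- Build a homeomorphism from an equivalence under which openness corresponds. -/
def homeoOfOpenIff [TopologicalSpace X] [TopologicalSpace Y] (φ : X ≃ Y)
    (h : ∀ s : Set Y, IsOpen (φ ⁻¹' s) ↔ IsOpen s) : X ≃ₜ Y where
  toEquiv := φ
  continuous_toFun := continuous_def.2 fun s hs => (h s).2 hs
  continuous_invFun := continuous_def.2 fun t ht => by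
    show IsOpen (φ.symm ⁻¹' t)
    have h1 : φ.symm ⁻¹' t = φ '' t := (φ.image_eq_preimage_symm t).symm
    rw [h1]
    exact (h (φ '' t)).1 (by rw [φ.preimage_image t]; exact ht)

/-- Any two empty spaces are homeomorphic. -/
def emptyHomeo (X Y : Type*) [TopologicalSpace X] [TopologicalSpace Y]
    [IsEmpty X] [IsEmpty Y] : X ≃ₜ Y where
  toEquiv := Equiv.equivOfIsEmpty X Y
  continuous_toFun := continuous_def.2 fun s _ => by
    rw [Set.eq_empty_of_isEmpty (_ ⁻¹' s)]; exact isOpen_empty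
  continuous_invFun := continuous_def.2 fun s _ => by
    rw [Set.eq_empty_of_isEmpty (_ ⁻¹' s)]; exact isOpen_empty

/-- Fiberwise homeomorphisms give a homeomorphism of sigma sums. -/
def sigmaCongrRightHomeo {I : Type*} {A B : I → Type*} [∀ i, TopologicalSpace (A i)]
    [∀ i, TopologicalSpace (B i)] (φ : ∀ i, A i ≃ₜ B i) : (Σ i, A i) ≃ₜ Σ i, B i where
  toEquiv := Equiv.sigmaCongrRight fun i => (φ i).toEquiv
  continuous_toFun := continuous_sigma fun i => continuous_sigmaMk.comp (φ i).continuous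
  continuous_invFun := continuous_sigma fun i => continuous_sigmaMk.comp (φ i).symm.continuous

/-- Sum of sigmas over the same index is the sigma of sums. -/
def sigmaSumHomeo {I : Type*} (A B : I → Type*) [∀ i, TopologicalSpace (A i)]
    [∀ i, TopologicalSpace (B i)] : ((Σ i, A i) ⊕ (Σ i, B i)) ≃ₜ Σ i, (A i ⊕ B i) :=
  homeoOfOpenIff
    { toFun := Sum.elim (fun p => ⟨p.1, Sum.inl p.2⟩) (fun p => ⟨p.1, Sum.inr p.2⟩)
      invFun := fun p => p.2.elim (fun a => Sum.inl ⟨p.1, a⟩) (fun b => Sum.inr ⟨p.1, b⟩)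
      left_inv := by rintro (⟨i, a⟩ | ⟨i, b⟩) <;> rfl
      right_inv := by rintro ⟨i, a | b⟩ <;> rfl }
    (by
      intro s
      rw [isOpen_sum_iff, isOpen_sigma_iff, isOpen_sigma_iff, isOpen_sigma_iff]
      constructor
      · rintro ⟨h1, h2⟩ i
        rw [isOpen_sum_iff]
        exact ⟨h1 i, h2 i⟩
      · intro h
        exact ⟨fun i => (isOpen_sum_iff.1 (h i)).1, fun i => (isOpen_sum_iff.1 (h i)).2⟩)

/-- Splitting off the zeroth summand of a constant countable sigma. -/
def natSigmaSplit (Z : Type*) [TopologicalSpace Z] :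
    (Σ _ : ℕ, Z) ≃ₜ (Z ⊕ Σ _ : ℕ, Z) :=
  homeoOfOpenIff
    { toFun := fun p => match p with
        | ⟨0, z⟩ => Sum.inl z
        | ⟨n + 1, z⟩ => Sum.inr ⟨n, z⟩
      invFun := Sum.elim (fun z => ⟨0, z⟩) (fun p => ⟨p.1 + 1, p.2⟩)
      left_inv := by rintro ⟨(_ | n), z⟩ <;> rfl
      right_inv := by rintro (z | ⟨n, z⟩) <;> rfl }
    (by
      intro s
      rw [isOpen_sigma_iff, isOpen_sum_iff, isOpen_sigma_iff]
      constructor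
      · intro h
        exact ⟨h 0, fun n => h (n + 1)⟩
      · rintro ⟨h0, h⟩ (_ | n)
        · exact h0
        · exact h n)

/-- A countable sigma of countable sigmas of a constant space. -/
def natSigmaSigma (Z : Type*) [TopologicalSpace Z] :
    (Σ _ : ℕ, Z) ≃ₜ (Σ _ : ℕ, Σ _ : ℕ, Z) :=
  letI q : ℕ × ℕ ≃ ℕ := Denumerable.eqv (ℕ × ℕ)
  (homeoOfOpenIff
    { toFun := fun p => ⟨q (p.1, p.2.1), p.2.2⟩
      invFun := fun p => ⟨(q.symm p.1).1, (q.symm p.1).2, p.2⟩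
      left_inv := by rintro ⟨n, m, z⟩; simp
      right_inv := by rintro ⟨k, z⟩; simp }
    (by
      intro s
      simp only [isOpen_sigma_iff]
      constructor
      · intro h k
        have h2 := h (q.symm k).1 (q.symm k).2
        have h3 : Sigma.mk k ⁻¹' s = Sigma.mk (q (q.symm k)) ⁻¹' s := by
          rw [q.apply_symm_apply]
        rw [h3]
        exact h2
      · intro h n m
        exact h (q (n, m)))).symm

/-- A countable sigma whose positive fibers are empty is its zeroth fiber. -/
def sigmaEmptyTail (Z : ℕ → Type*) [∀ k, TopologicalSpace (Z k)]
    [he : ∀ k, IsEmpty (Z (k + 1))] : (Σ k, Z k) ≃ₜ Z 0 :=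
  homeoOfOpenIff
    { toFun := fun p => match p with
        | ⟨0, z⟩ => z
        | ⟨k + 1, z⟩ => ((he k).false z).elim
      invFun := fun z => ⟨0, z⟩
      left_inv := by
        rintro ⟨(_ | k), z⟩
        · rfl
        · exact isEmptyElim z
      right_inv := fun z => rfl }
    (by
      intro s
      rw [isOpen_sigma_iff]
      constructor
      · intro h
        exact h 0
      · intro h k
        rcases k with _ | k
        · exact h
        · rw [Set.eq_empty_of_isEmpty (_ ⁻¹' _)]; exact isOpen_empty)

/-- Decomposition of a sigma along the fibers of a map on the indices. -/
def sigmaFiberHomeo {J I : Type*} (g : J → I) (A : J → Type*) [∀ j, TopologicalSpace (A j)] :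
    (Σ i : I, Σ n : { n : J // g n = i }, A n.1) ≃ₜ Σ n : J, A n :=
  homeoOfOpenIff
    { toFun := fun p => ⟨p.2.1.1, p.2.2⟩
      invFun := fun p => ⟨g p.1, ⟨p.1, rfl⟩, p.2⟩
      left_inv := by rintro ⟨i, ⟨n, rfl⟩, x⟩; rfl
      right_inv := by rintro ⟨n, x⟩; rfl }
    (by
      intro s
      simp only [isOpen_sigma_iff]
      constructor
      · intro h n
        exact h (g n) ⟨n, rfl⟩
      · rintro h i ⟨n, rfl⟩
        exact h n)

instance plift_topology {P : Prop} : TopologicalSpace (PLift P) := ⊥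

/-- Padding a sigma over a subtype of `ℕ` to a sigma over `ℕ`. -/
def padHomeo {I : Type*} (g : ℕ → I) (b : I) (A : ℕ → Type*) [∀ k, TopologicalSpace (A k)] :
    (Σ n : { n : ℕ // g n = b }, A n.1) ≃ₜ Σ k : ℕ, (PLift (g k = b) × A k) :=
  homeoOfOpenIff
    { toFun := fun p => ⟨p.1.1, ⟨p.1.2⟩, p.2⟩
      invFun := fun p => ⟨⟨p.1, p.2.1.down⟩, p.2.2⟩
      left_inv := by rintro ⟨⟨n, hn⟩, x⟩; rfl
      right_inv := by rintro ⟨k, ⟨hk⟩, x⟩; rfl }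
    (by
      intro s
      rw [isOpen_sigma_iff, isOpen_sigma_iff]
      constructor
      · intro h k
        by_cases hk : g k = b
        · have h1 : IsOpen {x : A k | ⟨k, ⟨hk⟩, x⟩ ∈ s} := h ⟨k, hk⟩
          have : Sigma.mk k ⁻¹' s = Prod.snd ⁻¹' {x : A k | ⟨k, ⟨hk⟩, x⟩ ∈ s} := by
            ext ⟨⟨p⟩, x⟩; exact Iff.rfl
          rw [this]
          exact h1.preimage continuous_snd
        · haveI : IsEmpty (PLift (g k = b)) := ⟨fun p => hk p.down⟩
          rw [Set.eq_empty_of_isEmpty (_ ⁻¹' _)]; exact isOpen_empty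
      · rintro h ⟨n, hn⟩
        have h2 : Continuous (fun x : A n => ((⟨hn⟩ : PLift (g n = b)), x)) :=
          Continuous.prodMk continuous_const continuous_id
        have h3 := (h n).preimage h2
        exact h3)

/-- Killing a unit `PLift` factor. -/
def pliftFactorHomeo {P : Prop} (hP : P) (A : Type*) [TopologicalSpace A] :
    (PLift P × A) ≃ₜ A where
  toEquiv :=
    { toFun := Prod.snd
      invFun := fun a => (⟨hP⟩, a)
      left_inv := by rintro ⟨⟨p⟩, a⟩; rfl
      right_inv := fun a => rfl }
  continuous_toFun := continuous_snd
  continuous_invFun := Continuous.prodMk continuous_const continuous_id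

end Helpers

theorem isOpen_fSum_iff {I : Type*} (G : Filter I) (X : I → Type*)
    [∀ i, TopologicalSpace (X i)] (U : Set (Option (Σ i, X i))) :
    IsOpen[fSum G X] U ↔ (∀ i, IsOpen {x : X i | Option.some ⟨i, x⟩ ∈ U}) ∧
      (Option.none ∈ U → ∃ F₀ ∈ G, ∀ i ∈ F₀, ∀ x : X i, Option.some ⟨i, x⟩ ∈ U) :=
  Iff.rfl

noncomputable section

/-- The key splitting: if `Xs ∈ F` has infinite complement and the trace of `F` on
`Xs` is a copy of `F`, then the `F`-sum of constant fibers `Z` splits off a free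
countable sum of copies of `Z`. -/
def fSumSplit (F : Filter ℕ) (Z : Type*) [TopologicalSpace Z]
    (Xs : Set ℕ) (hXF : Xs ∈ F) (e : Xs ≃ ℕ)
    (he : ∀ A : Set ℕ, A ∈ F ↔ e ⁻¹' A ∈ Filter.comap (Subtype.val : Xs → ℕ) F)
    (c : ℕ ≃ ↥(Xsᶜ)) :
    @Homeomorph (Option (Σ _ : ℕ, Z)) ((Option (Σ _ : ℕ, Z)) ⊕ (Σ _ : ℕ, Z))
      (fSum F fun _ => Z) (@instTopologicalSpaceSum _ _ (fSum F fun _ => Z) _) := by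
  letI tO : TopologicalSpace (Option (Σ _ : ℕ, Z)) := fSum F fun _ => Z
  classical
  refine Homeomorph.symm (homeoOfOpenIff
    { toFun := Sum.elim
        (fun o => o.map (fun p => ⟨(e.symm p.1 : ℕ), p.2⟩))
        (fun p => Option.some ⟨((c p.1 : ↥(Xsᶜ)) : ℕ), p.2⟩)
      invFun := fun o => o.elim (Sum.inl Option.none) (fun p =>
        if h : p.1 ∈ Xs then Sum.inl (Option.some ⟨e ⟨p.1, h⟩, p.2⟩)
        else Sum.inr ⟨c.symm ⟨p.1, h⟩, p.2⟩)
      left_inv := ?_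
      right_inv := ?_ } ?_)
  · rintro ((_ | ⟨k, z⟩) | ⟨m, z⟩)
    · rfl
    · show (if h : (e.symm k : ℕ) ∈ Xs then _ else _) = _
      rw [dif_pos (e.symm k).2]
      simp
    · show (if h : ((c m : ↥(Xsᶜ)) : ℕ) ∈ Xs then _ else _) = _
      rw [dif_neg (fun h => (c m).2 h)]
      simp
  · rintro (_ | ⟨n, z⟩)
    · rfl
    · by_cases h : n ∈ Xs
      · show Sum.elim _ _ (if h' : n ∈ Xs then _ else _) = _
        rw [dif_pos h]
        simp
      · show Sum.elim _ _ (if h' : n ∈ Xs then _ else _) = _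
        rw [dif_neg h]
        simp
  · intro s
    rw [isOpen_sum_iff]
    rw [show (IsOpen s ↔ _) from isOpen_fSum_iff F (fun _ => Z) s]
    rw [show (IsOpen (Sum.inl ⁻¹' _) ↔ _) from isOpen_fSum_iff F (fun _ => Z) _]
    rw [isOpen_sigma_iff]
    constructor
    · rintro ⟨⟨hsl, hnone⟩, hsg⟩
      constructor
      · intro n
        by_cases h : n ∈ Xs
        · have h2 : IsOpen {z : Z | Option.some ⟨((e.symm (e ⟨n, h⟩) : Xs) : ℕ), z⟩ ∈ s} :=
            hsl (e ⟨n, h⟩)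
          simpa using h2
        · have h2 : IsOpen {z : Z |
              Option.some ⟨((c (c.symm ⟨n, h⟩) : ↥(Xsᶜ)) : ℕ), z⟩ ∈ s} := hsg (c.symm ⟨n, h⟩)
          simpa using h2
      · intro hns
        obtain ⟨F₀, hF₀, hall⟩ := hnone hns
        obtain ⟨s₀, hs₀F, hsub⟩ := Filter.mem_comap.1 ((he F₀).1 hF₀)
        refine ⟨s₀ ∩ Xs, Filter.inter_mem hs₀F hXF, ?_⟩
        rintro n ⟨hn₁, hn₂⟩ z
        have h3 : e ⟨n, hn₂⟩ ∈ F₀ := hsub hn₁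
        have h4 : Option.some ⟨((e.symm (e ⟨n, hn₂⟩) : Xs) : ℕ), z⟩ ∈ s := hall _ h3 z
        simpa using h4
    · rintro ⟨hsl, hnone⟩
      refine ⟨⟨fun k => hsl (e.symm k : ℕ), fun hns => ?_⟩, fun m => hsl ((c m : ↥(Xsᶜ)) : ℕ)⟩
      obtain ⟨F₁, hF₁, hall⟩ := hnone hns
      have hA : {k : ℕ | (e.symm k : ℕ) ∈ F₁} ∈ F := by
        rw [he]
        have : e ⁻¹' {k : ℕ | (e.symm k : ℕ) ∈ F₁} =
            (Subtype.val : Xs → ℕ) ⁻¹' F₁ := by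
          ext x; simp
        rw [this]
        exact Filter.preimage_mem_comap hF₁
      exact ⟨_, hA, fun k hk z => hall _ hk z⟩

end

section MainHelpers

open Set Filter Topology

universe u v

def padFam (W : Type u) : ℕ → Type u
  | 0 => W
  | _ + 1 => PEmpty

instance padFam.topologicalSpace (W : Type u) [tW : TopologicalSpace W] :
    ∀ k, TopologicalSpace (padFam W k)
  | 0 => tW
  | _ + 1 => inferInstanceAs (TopologicalSpace PEmpty)

instance padFam.isEmpty (W : Type u) (k : ℕ) : IsEmpty (padFam W (k + 1)) :=
  inferInstanceAs (IsEmpty PEmpty)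

theorem equiv_nat_of_infinite (s : Set ℕ) (hs : s.Infinite) : Nonempty (ℕ ≃ ↥s) := by
  haveI := hs.to_subtype
  obtain ⟨d⟩ := nonempty_denumerable (↥s)
  exact ⟨(Denumerable.eqv (↥s)).symm⟩

theorem exists_nice_set (F : Filter ℕ)
    (hhom : ∀ X : Set ℕ, (∀ s ∈ F, (X ∩ s).Nonempty) →
      ∃ e : X ≃ ℕ, ∀ A : Set ℕ,
        A ∈ F ↔ e ⁻¹' A ∈ Filter.comap (Subtype.val : X → ℕ) F)
    (hprod : ∃ t : ℕ ≃ ℕ × ℕ, ∀ B : Set (ℕ × ℕ),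
      B ∈ prodNatFilter F ↔ t ⁻¹' B ∈ F) :
    ∃ Xs : Set ℕ, Xs ∈ F ∧ (Xsᶜ : Set ℕ).Infinite ∧
      ∃ e : Xs ≃ ℕ, ∀ A : Set ℕ,
        A ∈ F ↔ e ⁻¹' A ∈ Filter.comap (Subtype.val : Xs → ℕ) F := by
  classical
  obtain ⟨t, ht⟩ := hprod
  by_cases hbot : (∅ : Set ℕ) ∈ F
  · refine ⟨{n | Even n}, Filter.mem_of_superset hbot (Set.empty_subset _), ?_, ?_⟩
    · apply Set.infinite_of_injective_forall_mem (f := fun k : ℕ => 2 * k + 1)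
        (hi := fun a b hab => by simpa using hab)
      intro k
      simp only [Set.mem_compl_iff, Set.mem_setOf_eq, Nat.even_iff]
      omega
    · have hinf : ({n | Even n} : Set ℕ).Infinite := by
        apply Set.infinite_of_injective_forall_mem (f := fun k : ℕ => 2 * k)
          (hi := fun a b hab => by simpa using hab)
        exact fun k => ⟨k, two_mul k⟩
      obtain ⟨e⟩ := equiv_nat_of_infinite _ hinf
      refine ⟨e.symm, fun A => ⟨fun _ => ?_, fun _ => Filter.mem_of_superset hbot
        (Set.empty_subset _)⟩⟩
      exact Filter.mem_of_superset (Filter.preimage_mem_comap hbot) (by simp)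
  · by_cases htop : ∀ A ∈ F, A = Set.univ
    · exfalso
      obtain ⟨e, -⟩ := hhom {0} (fun s hs => by rw [htop s hs]; exact ⟨0, rfl, trivial⟩)
      haveI : Finite (↥({0} : Set ℕ)) := (Set.finite_singleton 0).to_subtype
      haveI := Finite.of_equiv _ e
      exact not_finite ℕ
    · push_neg at htop
      obtain ⟨A₀, hA₀F, hA₀ne⟩ := htop
      have hB : (A₀ ×ˢ (Set.univ : Set ℕ)) ∈ prodNatFilter F :=
        Filter.mem_generate_of_mem ⟨A₀, hA₀F, rfl⟩
      have hXs : t ⁻¹' (A₀ ×ˢ (Set.univ : Set ℕ)) ∈ F := (ht _).1 hB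
      obtain ⟨a, ha⟩ := (Set.ne_univ_iff_exists_notMem A₀).1 hA₀ne
      refine ⟨_, hXs, ?_, ?_⟩
      · apply Set.infinite_of_injective_forall_mem (f := fun m : ℕ => t.symm (a, m))
          (hi := fun x y hxy => by simpa using t.symm.injective hxy)
        intro m
        simp [Set.mem_compl_iff, Set.mem_preimage, ha]
      · apply hhom
        intro s hs
        have h2 : t ⁻¹' (A₀ ×ˢ (Set.univ : Set ℕ)) ∩ s ∈ F := Filter.inter_mem hXs hs
        rcases Set.eq_empty_or_nonempty (t ⁻¹' (A₀ ×ˢ (Set.univ : Set ℕ)) ∩ s) with h | h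
        · exact absurd (h ▸ h2) hbot
        · exact h

end MainHelpers

/-- Lemma 2.6: if `F` is homogeneous, isomorphic to `F × ℕ`, and not the cofinite
filter, and `T_α` are the associated scattered spaces (`T₀ = ∅`, `T₁` a point,
`T_{α+1} = ({n} × T_α)ₙ ∪_F {∞}`, `T_α = ⊕_{β<α} T_β` at limits), then each `T_α` is
homeomorphic to any topological sum of `T_α` with countably many `T_{β_n}`, `β_n < α`. -/
theorem T_sum_homeomorph (F : Filter ℕ)
    (hhom : ∀ X : Set ℕ, (∀ s ∈ F, (X ∩ s).Nonempty) →
      ∃ e : X ≃ ℕ, ∀ A : Set ℕ,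
        A ∈ F ↔ e ⁻¹' A ∈ Filter.comap (Subtype.val : X → ℕ) F)
    (hprod : ∃ t : ℕ ≃ ℕ × ℕ, ∀ B : Set (ℕ × ℕ),
      B ∈ prodNatFilter F ↔ t ⁻¹' B ∈ F)
    (hncof : F ≠ Filter.cofinite)
    (T : Ordinal → Type*) [∀ α, TopologicalSpace (T α)]
    (h0 : Nonempty (T 0 ≃ₜ PEmpty))
    (h1 : Nonempty (T 1 ≃ₜ PUnit))
    (hsucc : ∀ α : Ordinal,
      Nonempty (@Homeomorph (T (α + 1)) (Option (Σ _ : ℕ, T α)) _ (fSum F fun _ : ℕ => T α)))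
    (hlim : ∀ α : Ordinal, Order.IsSuccLimit α → Nonempty (T α ≃ₜ Σ β : Set.Iio α, T β.1)) :
    ∀ (α : Ordinal) (X : ℕ → Type*) (_ : ∀ n, TopologicalSpace (X n)),
      (∀ n : ℕ, ∃ β < α, Nonempty (X n ≃ₜ T β)) →
      Nonempty (T α ≃ₜ (T α ⊕ Σ n : ℕ, X n)) := by
  classical
  obtain ⟨Xs, hXF, hXc, e, he⟩ := exists_nice_set F hhom hprod
  obtain ⟨c⟩ := equiv_nat_of_infinite _ hXc
  haveI hT0e : IsEmpty (T 0) := Equiv.isEmpty h0.some.toEquiv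
  intro α
  induction α using Ordinal.induction with
  | h α IH =>
    intro X tX hX
    letI := tX
    rcases Ordinal.zero_or_succ_or_isSuccLimit α with rfl | ⟨γ, rfl⟩ | hlim'
    · obtain ⟨β, hβ, -⟩ := hX 0
      exact absurd hβ (not_lt_zero (a := β))
    · -- successor case
      rw [← Ordinal.add_one_eq_succ] at hX IH ⊢
      letI tO : TopologicalSpace (Option (Σ _ : ℕ, T γ)) := fSum F fun _ : ℕ => T γ
      obtain ⟨hs⟩ := hsucc γ
      have hsplit := fSumSplit F (T γ) Xs hXF e he c
      -- absorbing one small space into the countable sum of `T γ`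
      have absorbOne : ∀ (W : Type _) (tW : TopologicalSpace W) (β : Ordinal), β < γ + 1 →
          Nonempty (W ≃ₜ T β) → Nonempty (((Σ _ : ℕ, T γ) ⊕ W) ≃ₜ (Σ _ : ℕ, T γ)) := by
        intro W tW β hβ hW
        rw [Ordinal.add_one_eq_succ, Order.lt_succ_iff] at hβ
        rcases eq_or_lt_of_le hβ with rfl | hlt
        · obtain ⟨h5⟩ := hW
          exact ⟨(Homeomorph.sumComm _ _).trans ((Homeomorph.sumCongr h5
            (Homeomorph.refl _)).trans (natSigmaSplit (T β)).symm)⟩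
        · have h0γ : (0 : Ordinal) < γ := lt_of_le_of_lt (zero_le (a := β)) hlt
          have hZ : ∀ k, ∃ β' < γ, Nonempty (padFam W k ≃ₜ T β') := by
            intro k
            cases k with
            | zero => exact ⟨β, hlt, hW⟩
            | succ k => exact ⟨0, h0γ, ⟨emptyHomeo _ _⟩⟩
          obtain ⟨hTγ⟩ := IH γ (by rw [Ordinal.add_one_eq_succ]; exact Order.lt_succ γ)
            (padFam W) (fun k => inferInstance) hZ
          have h6 : (Σ k, padFam W k) ≃ₜ W := sigmaEmptyTail (padFam W)
          have habs : (T γ ⊕ W) ≃ₜ T γ :=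
            (Homeomorph.sumCongr (Homeomorph.refl _) h6.symm).trans hTγ.symm
          refine ⟨(Homeomorph.sumComm _ _).trans ?_⟩
          exact (Homeomorph.sumCongr (Homeomorph.refl W) (natSigmaSplit (T γ))).trans
            ((Homeomorph.sumAssoc _ _ _).symm.trans
              ((Homeomorph.sumCongr ((Homeomorph.sumComm _ _).trans habs)
                (Homeomorph.refl _)).trans (natSigmaSplit (T γ)).symm))
      have hEn : ∀ n, Nonempty (((Σ _ : ℕ, T γ) ⊕ X n) ≃ₜ (Σ _ : ℕ, T γ)) := by
        intro n
        obtain ⟨β, hβ, hW⟩ := hX n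
        exact absorbOne (X n) (tX n) β hβ hW
      have hE : Nonempty (((Σ _ : ℕ, T γ) ⊕ (Σ n, X n)) ≃ₜ (Σ _ : ℕ, T γ)) := by
        refine ⟨(Homeomorph.sumCongr (natSigmaSigma (T γ)) (Homeomorph.refl _)).trans ?_⟩
        exact (sigmaSumHomeo (fun _ : ℕ => (Σ _ : ℕ, T γ)) X).trans
          ((sigmaCongrRightHomeo fun n => (hEn n).some).trans (natSigmaSigma (T γ)).symm)
      obtain ⟨hE'⟩ := hE
      have hstar : T (γ + 1) ≃ₜ (T (γ + 1) ⊕ (Σ _ : ℕ, T γ)) :=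
        hs.trans (hsplit.trans (Homeomorph.sumCongr hs.symm (Homeomorph.refl _)))
      refine ⟨hstar.trans ?_⟩
      exact (Homeomorph.sumCongr (Homeomorph.refl _) hE'.symm).trans
        ((Homeomorph.sumAssoc _ _ _).symm.trans
          (Homeomorph.sumCongr hstar.symm (Homeomorph.refl _)))
    · -- limit case
      obtain ⟨hl⟩ := hlim α hlim'
      choose β hβlt hXT using hX
      have hsl : ∀ n, Order.succ (β n) < α := fun n => hlim'.succ_lt (hβlt n)
      set g : ℕ → ↥(Set.Iio α) := fun n => ⟨Order.succ (β n), hsl n⟩ with hg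
      have perb : ∀ b : ↥(Set.Iio α),
          Nonempty ((T b.1 ⊕ Σ k : ℕ, (PLift (g k = b) × X k)) ≃ₜ T b.1) := by
        intro b
        by_cases hne : ∃ k, g k = b
        · obtain ⟨k₀, hk₀⟩ := hne
          have hb0 : (0 : Ordinal) < b.1 := by
            rw [← hk₀]
            exact lt_of_le_of_lt zero_le' (Order.lt_succ _)
          have hQ : ∀ k, ∃ δ < b.1, Nonempty ((PLift (g k = b) × X k) ≃ₜ T δ) := by
            intro k
            by_cases h : g k = b
            · refine ⟨β k, ?_, ⟨(pliftFactorHomeo h (X k)).trans (hXT k).some⟩⟩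
              rw [← h]
              exact Order.lt_succ (β k)
            · haveI : IsEmpty (PLift (g k = b)) := ⟨fun p => h p.down⟩
              exact ⟨0, hb0, ⟨emptyHomeo _ _⟩⟩
          obtain ⟨hb⟩ := IH b.1 b.2 _ (fun k => inferInstance) hQ
          exact ⟨hb.symm⟩
        · haveI : IsEmpty (Σ k : ℕ, (PLift (g k = b) × X k)) := by
            constructor
            rintro ⟨k, ⟨hk⟩, -⟩
            exact hne ⟨k, hk⟩
          exact ⟨Homeomorph.sumEmpty _ _⟩
      have hfib : (Σ n, X n) ≃ₜ Σ b : ↥(Set.Iio α), Σ k : ℕ, (PLift (g k = b) × X k) :=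
        (sigmaFiberHomeo g X).symm.trans (sigmaCongrRightHomeo fun b => padHomeo g b X)
      have main : (T α ⊕ Σ n, X n) ≃ₜ T α :=
        (Homeomorph.sumCongr hl hfib).trans <|
          (sigmaSumHomeo (fun b : ↥(Set.Iio α) => T b.1)
            (fun b => Σ k : ℕ, (PLift (g k = b) × X k))).trans <|
          (sigmaCongrRightHomeo fun b => (perb b).some).trans hl.symm
      exact ⟨main.symm⟩
end
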